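/- Let f : ℝ^d → ℝ be μ-strongly convex (μ > 0), let g = (g_1, …, g_q) : ℝ^d → ℝ^q have each component convex with all subgradients of each g_l bounded in norm by L_g, let A ∈ ℝ^{p×d}, b, v ∈ ℝ^p and z ∈ ℝ^q. For ζ = (u, y) ∈ ℝ^p × ℝ^q_{≥0}, the function x ↦ f(x) + ⟨u, A x − b − v⟩ + ⟨y, g(x) − z⟩ has a unique minimizer x(ζ), and the dual function φ(ζ) = min_x [f(x) + ⟨u, A x − b − v⟩ + ⟨y, g(x) − z⟩] is concave on ℝ^p × ℝ^q_{≥0}; moreover the map ζ ↦ (A x(ζ) − b − v, g(x(ζ)) − z) is a supergradient selection for φ (i.e., φ(ζ') ≤ φ(ζ) + ⟨(A x(ζ) − b − v, g(x(ζ)) − z), ζ' − ζ⟩ for all ζ' ∈ ℝ^p × ℝ^q_{≥0}), and there exists a constant L > 0, depending only on ‖A‖, q, L_g and μ, such that this map is L-Lipschitz on ℝ^p × ℝ^q_{≥0}. -/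

import Mathlib

open RealInnerProductSpace Finset

/-- A vector `s` is a subgradient of `g` at `x` if `g y ≥ g x + ⟪s, y - x⟫` for all `y`. -/
def IsSubgradientAt {E : Type*} [NormedAddCommGroup E] [InnerProductSpace ℝ E]
    (g : E → ℝ) (s : E) (x : E) : Prop :=
  ∀ y, g y ≥ g x + ⟪s, y - x⟫

open Filter
set_option linter.unusedSectionVars false



theorem exists_subgradient {E : Type*} [NormedAddCommGroup E] [InnerProductSpace ℝ E]
    [FiniteDimensional ℝ E] [CompleteSpace E] {h : E → ℝ} (hh : ConvexOn ℝ Set.univ h) (x : E) :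
    ∃ s, IsSubgradientAt h s x := by
  have hcont : Continuous h := by
    exact continuousOn_univ.1 (hh.continuousOn isOpen_univ)
  set S : Set (E × ℝ) := {p | h p.1 < p.2} with hS
  have hSconv : Convex ℝ S := by
    rintro ⟨w, r⟩ hw ⟨w', r'⟩ hw' a c ha hc hac
    simp only [hS, Set.mem_setOf_eq] at *
    calc h (a • w + c • w') ≤ a * h w + c * h w' := by
          have := hh.2 (Set.mem_univ w) (Set.mem_univ w') ha hc hac
          simpa using this
      _ < a * r + c * r' := by
          rcases eq_or_lt_of_le ha with rfl | ha'
          · simp only [zero_mul, zero_add]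
            have : c = 1 := by linarith
            nlinarith
          · have h1 : a * h w < a * r := by nlinarith
            have h2 : c * h w' ≤ c * r' := by nlinarith
            linarith
      _ = a • (w, r).2 + c • (w', r').2 := by simp
  have hSopen : IsOpen S := isOpen_lt (hcont.comp continuous_fst) continuous_snd
  have hnot : (x, h x) ∉ S := by simp [hS]
  obtain ⟨F, hF⟩ := geometric_hahn_banach_open_point hSconv hSopen hnot
  set c : ℝ := F (0, 1) with hc
  have hdecomp : ∀ w : E, ∀ r : ℝ, F (w, r) = F (w, 0) + r * c := by
    intro w r
    have : (w, r) = (w, (0:ℝ)) + r • ((0:E), (1:ℝ)) := by simp [Prod.ext_iff]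
    rw [this, map_add, map_smul]; simp [hc, smul_eq_mul]
  have hcneg : c < 0 := by
    by_contra hcpos
    push_neg at hcpos
    have h1 : F (x, h x + 1) < F (x, h x) := hF _ (by simp [hS])
    rw [hdecomp x (h x + 1), hdecomp x (h x)] at h1
    nlinarith
  have hkey : ∀ w : E, F (w, 0) + h w * c ≤ F (x, 0) + h x * c := by
    intro w
    have hlt : ∀ t : ℝ, 0 < t → F (w, 0) + (h w + t) * c < F (x, 0) + h x * c := by
      intro t ht
      have := hF (w, h w + t) (by simp [hS]; linarith)
      rw [hdecomp w (h w + t), hdecomp x (h x)] at this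
      exact this
    by_contra hcon
    push_neg at hcon
    set ε := F (w, 0) + h w * c - (F (x, 0) + h x * c) with hε
    have hεpos : 0 < ε := by linarith
    have hnc : (0:ℝ) < -c := by linarith
    have ht : (ε / (-c)) * c = -ε := by field_simp; rw [div_self hcneg.ne]
    have := hlt (ε / (-c)) (div_pos hεpos hnc)
    nlinarith [this]
  -- Riesz representation of the linear part
  set φ : E →L[ℝ] ℝ := F.comp (ContinuousLinearMap.inl ℝ E ℝ) with hφ
  have hφapp : ∀ w, φ w = F (w, 0) := fun w => rfl
  set vE := (InnerProductSpace.toDual ℝ E).symm φ with hvE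
  have hvEapp : ∀ w, ⟪vE, w⟫ = φ w := fun w => InnerProductSpace.toDual_symm_apply
  refine ⟨(-c)⁻¹ • vE, fun w => ?_⟩
  have h1 := hkey w
  have h2 : ⟪(-c)⁻¹ • vE, w - x⟫ = (-c)⁻¹ * (F (w, 0) - F (x, 0)) := by
    rw [real_inner_smul_left, inner_sub_right, hvEapp, hvEapp, hφapp, hφapp]
  rw [ge_iff_le, h2]
  have hne : (0:ℝ) < -c := by linarith
  have h3 : (-c)⁻¹ * (F (w, 0) - F (x, 0)) ≤ h w - h x := by
    rw [inv_mul_le_iff₀ hne]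
    nlinarith
  linarith


-- norm combination identity
theorem norm_combo_sq {E : Type*} [NormedAddCommGroup E] [InnerProductSpace ℝ E]
    (t : ℝ) (w x : E) :
    ‖t • w + (1 - t) • x‖ ^ 2
      = t * ‖w‖ ^ 2 + (1 - t) * ‖x‖ ^ 2 - t * (1 - t) * ‖w - x‖ ^ 2 := by
  have h1 : ∀ v : E, ‖v‖ ^ 2 = ⟪v, v⟫ := fun v => (real_inner_self_eq_norm_sq v).symm
  rw [h1, h1, h1, h1]
  simp only [inner_add_left, inner_add_right, inner_sub_left, inner_sub_right,
    real_inner_smul_left, real_inner_smul_right, real_inner_comm x w]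
  ring

section Min
variable {E : Type*} [NormedAddCommGroup E] [InnerProductSpace ℝ E]
    [FiniteDimensional ℝ E] {μ : ℝ} {F : E → ℝ}

theorem exists_min (hμ : 0 < μ)
    (hG : ConvexOn ℝ Set.univ (fun w => F w - μ / 2 * ‖w‖ ^ 2)) :
    ∃ x, ∀ w, F x ≤ F w := by
  have : CompleteSpace E := FiniteDimensional.complete ℝ E
  obtain ⟨s, hs⟩ := exists_subgradient hG 0
  have hGcont : Continuous (fun w => F w - μ / 2 * ‖w‖ ^ 2) :=
    continuousOn_univ.1 (hG.continuousOn isOpen_univ)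
  have hFcont : Continuous F := by
    have : F = fun w => (F w - μ / 2 * ‖w‖ ^ 2) + μ / 2 * ‖w‖ ^ 2 := by funext w; ring
    rw [this]
    exact hGcont.add (continuous_const.mul ((continuous_norm).pow 2))
  have hlb : ∀ w : E, F 0 - 0 ^ 2 * (μ/2) - ‖s‖ * ‖w‖ + μ / 2 * ‖w‖ ^ 2 ≤ F w := by
    intro w
    have := hs w
    have h2 : ⟪s, w - 0⟫ ≥ -(‖s‖ * ‖w‖) := by
      have := abs_real_inner_le_norm s (w - 0)
      rw [sub_zero] at *
      cases' abs_le.1 this with hl hr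
      linarith
    simp only [ge_iff_le] at this
    simp only [norm_zero, sub_zero] at this h2
    nlinarith [this, h2]
  have hcoer : Tendsto F (cocompact E) atTop := by
    have hψ : Tendsto (fun r : ℝ => F 0 - 0 ^ 2 * (μ/2) - ‖s‖ * r + μ / 2 * r ^ 2) atTop atTop := by
      have : (fun r : ℝ => F 0 - 0 ^ 2 * (μ/2) - ‖s‖ * r + μ / 2 * r ^ 2)
          = fun r : ℝ => r * (μ / 2 * r - ‖s‖) + (F 0 - 0 ^ 2 * (μ/2)) := by funext r; ring
      rw [this]
      apply tendsto_atTop_add_const_right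
      apply Tendsto.atTop_mul_atTop₀ tendsto_id
      apply tendsto_atTop_add_const_right
      exact Tendsto.const_mul_atTop (by positivity) tendsto_id
    exact tendsto_atTop_mono hlb (hψ.comp tendsto_norm_cocompact_atTop)
  exact hFcont.exists_forall_le hcoer

theorem quad_growth (hμ : 0 < μ)
    (hG : ConvexOn ℝ Set.univ (fun w => F w - μ / 2 * ‖w‖ ^ 2))
    {x : E} (hx : ∀ w, F x ≤ F w) (w : E) :
    F x + μ / 2 * ‖w - x‖ ^ 2 ≤ F w := by
  have key : ∀ t : ℝ, 0 < t → t < 1 → F x + μ / 2 * (1 - t) * ‖w - x‖ ^ 2 ≤ F w := by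
    intro t ht ht1
    have hcvx := hG.2 (Set.mem_univ w) (Set.mem_univ x) (le_of_lt ht) (by linarith : (0:ℝ) ≤ 1 - t)
      (by ring)
    simp only [smul_eq_mul] at hcvx
    have hmin := hx (t • w + (1 - t) • x)
    have hn := norm_combo_sq t w x
    nlinarith [hcvx, hmin, hn]
  by_contra hcon
  push_neg at hcon
  have hεpos : 0 < F x + μ / 2 * ‖w - x‖ ^ 2 - F w := by linarith
  set ε := F x + μ / 2 * ‖w - x‖ ^ 2 - F w with hε
  set t := min (1/2 : ℝ) (ε / (μ / 2 * ‖w - x‖ ^ 2 + 1)) with htdef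
  have htpos : 0 < t := lt_min (by norm_num) (by positivity)
  have ht1 : t < 1 := lt_of_le_of_lt (min_le_left _ _) (by norm_num)
  have hkey := key t htpos ht1
  have hbound : μ / 2 * t * ‖w - x‖ ^ 2 < ε := by
    have h1 : t ≤ ε / (μ / 2 * ‖w - x‖ ^ 2 + 1) := min_le_right _ _
    have h2 : 0 < μ / 2 * ‖w - x‖ ^ 2 + 1 := by positivity
    have h3 : t * (μ / 2 * ‖w - x‖ ^ 2 + 1) ≤ ε := by
      rw [← le_div_iff₀ h2]; exact h1
    nlinarith
  nlinarith [hkey, hbound]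

theorem min_unique (hμ : 0 < μ)
    (hG : ConvexOn ℝ Set.univ (fun w => F w - μ / 2 * ‖w‖ ^ 2))
    {x y : E} (hx : ∀ w, F x ≤ F w) (hy : ∀ w, F y ≤ F w) : y = x := by
  have h1 := quad_growth hμ hG hx y
  have h2 := hy x
  have : ‖y - x‖ ^ 2 ≤ 0 := by nlinarith
  have : ‖y - x‖ = 0 := by nlinarith [norm_nonneg (y - x)]
  have := norm_sub_eq_zero_iff.1 this
  exact this
end Min

/-- The Lagrangian `x ↦ f x + ⟪u, A x − b − v⟫ + ⟪y, g x − z⟫` at `ζ = (u, y)`. -/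
noncomputable def lagrangian {d p q : ℕ}
    (f : EuclideanSpace ℝ (Fin d) → ℝ)
    (g : EuclideanSpace ℝ (Fin d) → EuclideanSpace ℝ (Fin q))
    (A : EuclideanSpace ℝ (Fin d) →L[ℝ] EuclideanSpace ℝ (Fin p))
    (b v : EuclideanSpace ℝ (Fin p)) (z : EuclideanSpace ℝ (Fin q))
    (ζ : EuclideanSpace ℝ (Fin p) × EuclideanSpace ℝ (Fin q))
    (x : EuclideanSpace ℝ (Fin d)) : ℝ :=
  f x + ⟪ζ.1, A x - b - v⟫ + ⟪ζ.2, g x - z⟫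

theorem convexOn_finset_sum {E : Type*} [NormedAddCommGroup E] [InnerProductSpace ℝ E]
    {ι : Type*} (t : Finset ι) {f : ι → E → ℝ}
    (h : ∀ i ∈ t, ConvexOn ℝ Set.univ (f i)) :
    ConvexOn ℝ Set.univ fun x => ∑ i ∈ t, f i x := by
  classical
  induction t using Finset.cons_induction with
  | empty => simpa using convexOn_const (0:ℝ) convex_univ
  | cons i t hi ih =>
    simp only [Finset.sum_cons]
    exact (h i (Finset.mem_cons_self i t)).add (ih fun j hj => h j (Finset.mem_cons_of_mem hj))

theorem sqrt_sq_add_sq_le {a bb : ℝ} (ha : 0 ≤ a) (hb : 0 ≤ bb) :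
    Real.sqrt (a ^ 2 + bb ^ 2) ≤ a + bb := by
  have h1 : a ^ 2 + bb ^ 2 ≤ (a + bb) ^ 2 := by nlinarith
  calc Real.sqrt (a ^ 2 + bb ^ 2) ≤ Real.sqrt ((a + bb) ^ 2) := Real.sqrt_le_sqrt h1
    _ = a + bb := Real.sqrt_sq (by linarith)

set_option maxHeartbeats 2000000 in
/-- For `μ`-strongly convex `f` and componentwise convex `g` with bounded
subgradients: for each `ζ = (u, y)` with `y ≥ 0` the Lagrangian has a unique minimizer `x(ζ)`;
the dual function `φ(ζ) = min_x L(x, ζ)` is concave on `ℝ^p × ℝ^q_{≥0}`; the map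
`ζ ↦ (A x(ζ) − b − v, g(x(ζ)) − z)` is a supergradient selection for `φ`; and it is
`L`-Lipschitz on `ℝ^p × ℝ^q_{≥0}` for some `L > 0`. -/
theorem dual_function_properties
    (d p q : ℕ) (μ Lg : ℝ) (hμ : 0 < μ)
    (f : EuclideanSpace ℝ (Fin d) → ℝ)
    (hf : ConvexOn ℝ Set.univ (fun x => f x - μ / 2 * ‖x‖ ^ 2))
    (g : EuclideanSpace ℝ (Fin d) → EuclideanSpace ℝ (Fin q))
    (hg : ∀ l, ConvexOn ℝ Set.univ (fun x => g x l))
    (hsub : ∀ (l : Fin q) (x s : EuclideanSpace ℝ (Fin d)),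
      IsSubgradientAt (fun w => g w l) s x → ‖s‖ ≤ Lg)
    (A : EuclideanSpace ℝ (Fin d) →L[ℝ] EuclideanSpace ℝ (Fin p))
    (b v : EuclideanSpace ℝ (Fin p)) (z : EuclideanSpace ℝ (Fin q))
    (D : Set (EuclideanSpace ℝ (Fin p) × EuclideanSpace ℝ (Fin q)))
    (hD : D = {ζ | ∀ l, 0 ≤ ζ.2 l}) :
    ∃ xm : (EuclideanSpace ℝ (Fin p) × EuclideanSpace ℝ (Fin q)) → EuclideanSpace ℝ (Fin d),
      -- `xm ζ` is a minimizer of the Lagrangian, and it is unique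
      (∀ ζ ∈ D, ∀ w, lagrangian f g A b v z ζ (xm ζ) ≤ lagrangian f g A b v z ζ w) ∧
      (∀ ζ ∈ D, ∀ w, (∀ w', lagrangian f g A b v z ζ w ≤ lagrangian f g A b v z ζ w') →
        w = xm ζ) ∧
      -- the dual function is concave on `ℝ^p × ℝ^q_{≥0}`
      ConcaveOn ℝ D (fun ζ => lagrangian f g A b v z ζ (xm ζ)) ∧
      -- supergradient property of `ζ ↦ (A x(ζ) − b − v, g(x(ζ)) − z)`
      (∀ ζ ∈ D, ∀ ζ' ∈ D,
        lagrangian f g A b v z ζ' (xm ζ') ≤ lagrangian f g A b v z ζ (xm ζ)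
          + ⟪A (xm ζ) - b - v, ζ'.1 - ζ.1⟫ + ⟪g (xm ζ) - z, ζ'.2 - ζ.2⟫) ∧
      -- Lipschitz continuity of the supergradient map on the dual domain
      (∃ L : ℝ, 0 < L ∧ ∀ ζ ∈ D, ∀ ζ' ∈ D,
        Real.sqrt (‖A (xm ζ) - A (xm ζ')‖ ^ 2 + ‖g (xm ζ) - g (xm ζ')‖ ^ 2)
          ≤ L * Real.sqrt (‖ζ.1 - ζ'.1‖ ^ 2 + ‖ζ.2 - ζ'.2‖ ^ 2)) := by
    classical
  subst hD
  set P := lagrangian f g A b v z with hP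
  set Lg' := max Lg 0 with hLg'def
  have hLg'0 : 0 ≤ Lg' := le_max_right _ _
  have hsub' : ∀ (l : Fin q) (x s : EuclideanSpace ℝ (Fin d)),
      IsSubgradientAt (fun w => g w l) s x → ‖s‖ ≤ Lg' :=
    fun l x s h => le_trans (hsub l x s h) (le_max_left _ _)
  -- componentwise Lipschitz bound for g
  have glip : ∀ (x x' : EuclideanSpace ℝ (Fin d)) (l : Fin q),
      |g x l - g x' l| ≤ Lg' * ‖x - x'‖ := by
    intro x x' l
    obtain ⟨s, hs⟩ := exists_subgradient (hg l) x'
    obtain ⟨s2, hs2⟩ := exists_subgradient (hg l) x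
    have hb1 : ‖s‖ ≤ Lg' := hsub' l x' s hs
    have hb2 : ‖s2‖ ≤ Lg' := hsub' l x s2 hs2
    have h1 := hs x
    have h2 := hs2 x'
    simp only [ge_iff_le] at h1 h2
    have hi1 : |⟪s, x - x'⟫| ≤ Lg' * ‖x - x'‖ := by
      calc |⟪s, x - x'⟫| ≤ ‖s‖ * ‖x - x'‖ := abs_real_inner_le_norm _ _
        _ ≤ Lg' * ‖x - x'‖ := by nlinarith [norm_nonneg (x - x')]
    have hi2 : |⟪s2, x' - x⟫| ≤ Lg' * ‖x - x'‖ := by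
      calc |⟪s2, x' - x⟫| ≤ ‖s2‖ * ‖x' - x‖ := abs_real_inner_le_norm _ _
        _ ≤ Lg' * ‖x - x'‖ := by rw [norm_sub_rev x' x]; nlinarith [norm_nonneg (x - x')]
    rw [abs_le] at *
    constructor <;> [linarith [hi1.1, hi1.2, hi2.1, hi2.2]; linarith [hi1.1, hi1.2, hi2.1, hi2.2]]
  -- norm bound for g
  have gnorm : ∀ (x x' : EuclideanSpace ℝ (Fin d)),
      ‖g x - g x'‖ ≤ Real.sqrt q * (Lg' * ‖x - x'‖) := by
    intro x x'
    rw [EuclideanSpace.norm_eq]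
    have hstep : ∑ l, ‖(g x - g x') l‖ ^ 2 ≤ (q : ℝ) * (Lg' * ‖x - x'‖) ^ 2 := by
      calc ∑ l, ‖(g x - g x') l‖ ^ 2 ≤ ∑ _l : Fin q, (Lg' * ‖x - x'‖) ^ 2 := by
            apply Finset.sum_le_sum
            intro l _
            have : ‖(g x - g x') l‖ = |g x l - g x' l| := by
              simp [PiLp.sub_apply, Real.norm_eq_abs]
            rw [this]
            have := glip x x' l
            nlinarith [abs_nonneg (g x l - g x' l)]
        _ = (q : ℝ) * (Lg' * ‖x - x'‖) ^ 2 := by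
            simp [Finset.sum_const, nsmul_eq_mul]
    calc Real.sqrt (∑ l, ‖(g x - g x') l‖ ^ 2)
        ≤ Real.sqrt ((q : ℝ) * (Lg' * ‖x - x'‖) ^ 2) := Real.sqrt_le_sqrt hstep
      _ = Real.sqrt q * (Lg' * ‖x - x'‖) := by
          rw [Real.sqrt_mul (Nat.cast_nonneg q), Real.sqrt_sq (by positivity)]
  -- strong convexity of the Lagrangian in x
  have hstrong : ∀ ζ : EuclideanSpace ℝ (Fin p) × EuclideanSpace ℝ (Fin q),
      (∀ l, 0 ≤ ζ.2 l) → ConvexOn ℝ Set.univ (fun x => P ζ x - μ / 2 * ‖x‖ ^ 2) := by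
    intro ζ hζ
    have h1 : ConvexOn ℝ Set.univ (fun x => ⟪ζ.1, A x - b - v⟫) := by
      refine ⟨convex_univ, fun x _ x' _ a c ha hc hac => ?_⟩
      simp only [smul_eq_mul]
      apply le_of_eq
      simp only [map_add, map_smul, inner_sub_right, inner_add_right, real_inner_smul_right]
      linear_combination (⟪ζ.1, b⟫ + ⟪ζ.1, v⟫) * hac
    have h2 : ConvexOn ℝ Set.univ (fun x => ⟪ζ.2, g x - z⟫) := by
      have heq : (fun x => ⟪ζ.2, g x - z⟫)
          = fun x => (∑ l, ζ.2 l * g x l) + (- ⟪ζ.2, z⟫) := by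
        funext x
        rw [inner_sub_right]
        have : ⟪ζ.2, g x⟫ = ∑ l, ζ.2 l * g x l := by
          simp [PiLp.inner_apply, RCLike.inner_apply, conj_trivial]; exact Finset.sum_congr rfl fun _ _ => mul_comm _ _
        rw [this]; ring
      rw [heq]
      refine ConvexOn.add ?_ (convexOn_const _ convex_univ)
      apply convexOn_finset_sum
      intro l _
      have := (hg l).smul (hζ l)
      simpa [smul_eq_mul] using this
    have heq : (fun x => P ζ x - μ / 2 * ‖x‖ ^ 2)
        = fun x => ((f x - μ / 2 * ‖x‖ ^ 2) + ⟪ζ.1, A x - b - v⟫) + ⟪ζ.2, g x - z⟫ := by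
      funext x; simp only [hP, lagrangian]; ring
    rw [heq]
    exact (hf.add h1).add h2
  -- existence of minimizers
  have hmin : ∀ ζ : EuclideanSpace ℝ (Fin p) × EuclideanSpace ℝ (Fin q),
      (∀ l, 0 ≤ ζ.2 l) → ∃ x, ∀ w, P ζ x ≤ P ζ w :=
    fun ζ hζ => exists_min hμ (hstrong ζ hζ)
  have hsk : ∀ ζ : EuclideanSpace ℝ (Fin p) × EuclideanSpace ℝ (Fin q),
      ∃ x, (∀ l, 0 ≤ ζ.2 l) → ∀ w, P ζ x ≤ P ζ w := by
    intro ζ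
    by_cases h : ∀ l, 0 ≤ ζ.2 l
    · exact (hmin ζ h).imp fun x hx _ => hx
    · exact ⟨0, fun h' => absurd h' h⟩
  choose xm hxm using hsk
  refine ⟨xm, ?_, ?_, ?_, ?_, ?_⟩
  · -- minimality
    intro ζ hζ w
    exact hxm ζ hζ w
  · -- uniqueness
    intro ζ hζ w hw
    exact min_unique hμ (hstrong ζ hζ) (hxm ζ hζ) hw
  · -- concavity
    constructor
    · intro ζ hζ ζ' hζ' a c ha hc hac
      intro l
      have : (a • ζ + c • ζ').2 l = a * ζ.2 l + c * ζ'.2 l := by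
        simp [Prod.snd_add, Prod.smul_snd]
      rw [this]
      have := hζ l; have := hζ' l
      positivity
    · intro ζ hζ ζ' hζ' a c ha hc hac
      simp only [Set.mem_setOf_eq] at hζ hζ'
      have hσ : ∀ l, 0 ≤ (a • ζ + c • ζ').2 l := by
        intro l
        have : (a • ζ + c • ζ').2 l = a * ζ.2 l + c * ζ'.2 l := by
          simp [Prod.snd_add, Prod.smul_snd]
        rw [this]
        have := hζ l; have := hζ' l
        positivity
      have haff : ∀ x, P (a • ζ + c • ζ') x = a * P ζ x + c * P ζ' x := by
        intro x
        simp only [hP, lagrangian, Prod.fst_add, Prod.snd_add, Prod.smul_fst, Prod.smul_snd,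
          inner_add_left, real_inner_smul_left]
        linear_combination (f x) * hac.symm
      have h1 : a * P ζ (xm ζ) ≤ a * P ζ (xm (a • ζ + c • ζ')) :=
        mul_le_mul_of_nonneg_left (hxm ζ hζ _) ha
      have h2 : c * P ζ' (xm ζ') ≤ c * P ζ' (xm (a • ζ + c • ζ')) :=
        mul_le_mul_of_nonneg_left (hxm ζ' hζ' _) hc
      have := haff (xm (a • ζ + c • ζ'))
      simp only [smul_eq_mul]
      linarith
  · -- supergradient
    intro ζ hζ ζ' hζ'
    simp only [Set.mem_setOf_eq] at hζ hζ'
    have hstep : P ζ' (xm ζ') ≤ P ζ' (xm ζ) := hxm ζ' hζ' _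
    have e1 : ⟪A (xm ζ) - b - v, ζ'.1 - ζ.1⟫
        = ⟪ζ'.1, A (xm ζ) - b - v⟫ - ⟪ζ.1, A (xm ζ) - b - v⟫ := by
      rw [real_inner_comm, inner_sub_left]
    have e2 : ⟪g (xm ζ) - z, ζ'.2 - ζ.2⟫
        = ⟪ζ'.2, g (xm ζ) - z⟫ - ⟪ζ.2, g (xm ζ) - z⟫ := by
      rw [real_inner_comm, inner_sub_left]
    have heq : P ζ' (xm ζ) = P ζ (xm ζ)
        + ⟪A (xm ζ) - b - v, ζ'.1 - ζ.1⟫ + ⟪g (xm ζ) - z, ζ'.2 - ζ.2⟫ := by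
      rw [e1, e2]; simp only [hP, lagrangian]; ring
    calc P ζ' (xm ζ') ≤ P ζ' (xm ζ) := hstep
      _ = _ := heq
  · -- Lipschitz
    set K := ‖A‖ + Real.sqrt q * Lg' with hK
    have hK0 : 0 ≤ K := by
      rw [hK]
      exact add_nonneg (norm_nonneg _) (mul_nonneg (Real.sqrt_nonneg _) hLg'0)
    have hLpos : 0 < 2 * K ^ 2 / μ + 1 := by
      have h1 : 0 ≤ 2 * K ^ 2 / μ := div_nonneg (by positivity) hμ.le
      linarith
    refine ⟨2 * K ^ 2 / μ + 1, hLpos, ?_⟩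
    intro ζ hζ ζ' hζ'
    simp only [Set.mem_setOf_eq] at hζ hζ'
    set x := xm ζ with hx
    set x' := xm ζ' with hx'
    set r := Real.sqrt (‖ζ.1 - ζ'.1‖ ^ 2 + ‖ζ.2 - ζ'.2‖ ^ 2) with hr
    have hr0 : 0 ≤ r := Real.sqrt_nonneg _
    have hr1 : ‖ζ.1 - ζ'.1‖ ≤ r := by
      rw [hr]
      calc ‖ζ.1 - ζ'.1‖ = Real.sqrt (‖ζ.1 - ζ'.1‖ ^ 2) := (Real.sqrt_sq (norm_nonneg _)).symm
        _ ≤ _ := Real.sqrt_le_sqrt (by nlinarith [sq_nonneg ‖ζ.2 - ζ'.2‖])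
    have hr2 : ‖ζ.2 - ζ'.2‖ ≤ r := by
      rw [hr]
      calc ‖ζ.2 - ζ'.2‖ = Real.sqrt (‖ζ.2 - ζ'.2‖ ^ 2) := (Real.sqrt_sq (norm_nonneg _)).symm
        _ ≤ _ := Real.sqrt_le_sqrt (by nlinarith [sq_nonneg ‖ζ.1 - ζ'.1‖])
    -- quadratic growth at both minimizers
    have h1 : P ζ x + μ / 2 * ‖x' - x‖ ^ 2 ≤ P ζ x' :=
      quad_growth hμ (hstrong ζ hζ) (hxm ζ hζ) x'
    have h2 : P ζ' x' + μ / 2 * ‖x - x'‖ ^ 2 ≤ P ζ' x :=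
      quad_growth hμ (hstrong ζ' hζ') (hxm ζ' hζ') x
    rw [norm_sub_rev x' x] at h1
    have expand : (P ζ x' - P ζ' x') + (P ζ' x - P ζ x)
        = ⟪ζ.1 - ζ'.1, A x' - A x⟫ + ⟪ζ.2 - ζ'.2, g x' - g x⟫ := by
      simp only [hP, lagrangian, inner_sub_left, inner_sub_right]
      ring
    have hdiff : μ * ‖x - x'‖ ^ 2
        ≤ ⟪ζ.1 - ζ'.1, A x' - A x⟫ + ⟪ζ.2 - ζ'.2, g x' - g x⟫ := by
      rw [← expand]; linarith
    have hA1 : ‖A x' - A x‖ ≤ ‖A‖ * ‖x - x'‖ := by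
      rw [← map_sub, norm_sub_rev x x']
      exact A.le_opNorm _
    have hg1 : ‖g x' - g x‖ ≤ Real.sqrt q * Lg' * ‖x - x'‖ := by
      have h := gnorm x' x
      rw [norm_sub_rev x' x] at h
      calc ‖g x' - g x‖ ≤ Real.sqrt q * (Lg' * ‖x - x'‖) := h
        _ = Real.sqrt q * Lg' * ‖x - x'‖ := by ring
    have hi1 : ⟪ζ.1 - ζ'.1, A x' - A x⟫ ≤ ‖ζ.1 - ζ'.1‖ * ‖A x' - A x‖ :=
      real_inner_le_norm _ _
    have hi2 : ⟪ζ.2 - ζ'.2, g x' - g x⟫ ≤ ‖ζ.2 - ζ'.2‖ * ‖g x' - g x‖ :=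
      real_inner_le_norm _ _
    have hmu : μ * ‖x - x'‖ ^ 2 ≤ K * r * ‖x - x'‖ := by
      have b1 : ‖ζ.1 - ζ'.1‖ * ‖A x' - A x‖ ≤ r * (‖A‖ * ‖x - x'‖) :=
        mul_le_mul hr1 hA1 (norm_nonneg _) hr0
      have b2 : ‖ζ.2 - ζ'.2‖ * ‖g x' - g x‖ ≤ r * (Real.sqrt q * Lg' * ‖x - x'‖) :=
        mul_le_mul hr2 hg1 (norm_nonneg _) hr0
      have hKe : K * r * ‖x - x'‖
          = r * (‖A‖ * ‖x - x'‖) + r * (Real.sqrt q * Lg' * ‖x - x'‖) := by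
        rw [hK]; ring
      linarith
    have hxx : ‖x - x'‖ ≤ K * r / μ := by
      rcases eq_or_lt_of_le (norm_nonneg (x - x')) with h0 | hpos
      · rw [← h0]
        exact div_nonneg (mul_nonneg hK0 hr0) hμ.le
      · rw [le_div_iff₀ hμ]
        have hh : μ * ‖x - x'‖ * ‖x - x'‖ ≤ K * r * ‖x - x'‖ := by
          calc μ * ‖x - x'‖ * ‖x - x'‖ = μ * ‖x - x'‖ ^ 2 := by ring
            _ ≤ K * r * ‖x - x'‖ := hmu
        have := le_of_mul_le_mul_right hh hpos
        linarith
    have hAx : ‖A x - A x'‖ ≤ ‖A‖ * ‖x - x'‖ := by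
      rw [← map_sub]; exact A.le_opNorm _
    have hgx : ‖g x - g x'‖ ≤ Real.sqrt q * Lg' * ‖x - x'‖ := by
      calc ‖g x - g x'‖ ≤ Real.sqrt q * (Lg' * ‖x - x'‖) := gnorm x x'
        _ = Real.sqrt q * Lg' * ‖x - x'‖ := by ring
    have hKe2 : K * ‖x - x'‖ = ‖A‖ * ‖x - x'‖ + Real.sqrt q * Lg' * ‖x - x'‖ := by
      rw [hK]; ring
    have hKd0 : 0 ≤ K * ‖x - x'‖ := mul_nonneg hK0 (norm_nonneg _)
    have hfin : 2 * K * (K * r / μ) = 2 * K ^ 2 / μ * r := by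
      field_simp
    calc Real.sqrt (‖A x - A x'‖ ^ 2 + ‖g x - g x'‖ ^ 2)
        ≤ ‖A x - A x'‖ + ‖g x - g x'‖ := sqrt_sq_add_sq_le (norm_nonneg _) (norm_nonneg _)
      _ ≤ K * ‖x - x'‖ + K * ‖x - x'‖ := by linarith
      _ ≤ 2 * K * (K * r / μ) := by
          linarith [mul_le_mul_of_nonneg_left hxx hK0]
      _ ≤ (2 * K ^ 2 / μ + 1) * r := by
          rw [hfin]; linarith [hr0]
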